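/- arXiv:1105.0557 — 2 statements merged into one kernel-verified Lean document; each statement's English description precedes it below -/
import Mathlib

section
/- Let (X,d) be a separable metric space such that the action (Iso(X),X) is Cauchy-indivisible, and suppose the Ellis semigroup E is a group. Then the action of E on X ∪ X_l has a Borel section, i.e., there is a Borel subset S of X ∪ X_l (with its subspace topology) that meets each E-orbit in X ∪ X_l in exactly one point. -/
open Filter Topology Set UniformSpace

noncomputable section

/-- The topology of pointwise convergence on the group of surjective isometries of `X`. -/
instance isoPointwiseTopology (X : Type*) [MetricSpace X] : TopologicalSpace (X ≃ᵢ X) :=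
  TopologicalSpace.induced (fun g => (g : X → X)) Pi.topologicalSpace

/-- A net `g` diverges (`g_i → ∞`), i.e. it has no convergent subnet; equivalently,
no cluster point. -/
def DivergentNet {G : Type*} [TopologicalSpace G] {ι : Type*} [Preorder ι]
    (g : ι → G) : Prop :=
  ∀ h : G, ¬ MapClusterPt h atTop g

/-- A sequence `g` diverges (`g_n → ∞`), i.e. it has no convergent subsequence. -/
def DivergentSeq {G : Type*} [TopologicalSpace G] (g : ℕ → G) : Prop :=
  ∀ φ : ℕ → ℕ, StrictMono φ → ∀ h : G, ¬ Tendsto (g ∘ φ) atTop (𝓝 h)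

/-- The natural evaluation action of `Iso(X)` on `X` is Cauchy-indivisible: whenever a
net `g` in `Iso(X)` has no convergent subnet and `(g_i x)` is a Cauchy net for some
`x`, then `(g_i y)` is a Cauchy net for every `y`. -/
def IsoCauchyIndivisible (X : Type*) [MetricSpace X] : Prop :=
  ∀ (ι : Type*) [Nonempty ι] [Preorder ι] [IsDirected ι (· ≤ ·)],
    ∀ g : ι → X ≃ᵢ X, DivergentNet g →
      (∃ x : X, Cauchy (map (fun i => g i x) atTop)) →
      ∀ y : X, Cauchy (map (fun i => g i y) atTop)

/-- Properness of the isometric evaluation action, expressed through emptiness of all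
limit sets `L(x)`: no net in `Iso(X)` without convergent subnet has `(g_i x)`
converging in `X`. -/
def IsoProperLimits (X : Type*) [MetricSpace X] : Prop :=
  ∀ (ι : Type*) [Nonempty ι] [Preorder ι] [IsDirected ι (· ≤ ·)],
    ∀ g : ι → X ≃ᵢ X, DivergentNet g →
      ∀ x y : X, ¬ Tendsto (fun i => g i x) atTop (𝓝 y)

/-- The canonical lift `ĝ` of an isometry of `X` to the completion `X̂`. -/
def hatIso {X : Type*} [MetricSpace X] (g : X ≃ᵢ X) : Completion X → Completion X :=
  Completion.map (g : X → X)

/-- The lifted group `{ĝ : g ∈ Iso(X)}` inside the selfmaps of `X̂`. -/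
def hatIsoSet (X : Type*) [MetricSpace X] : Set (Completion X → Completion X) :=
  Set.range (hatIso (X := X))

/-- The Ellis semigroup `E`: the closure of the lifted group `{ĝ}` in the topology of
pointwise convergence on selfmaps of `X̂`. -/
def Ellis (X : Type*) [MetricSpace X] : Set (Completion X → Completion X) :=
  closure (hatIsoSet X)

/-- The set `H` of pointwise limits on `X̂` of divergent sequences of lifted isometries. -/
def Hset (X : Type*) [MetricSpace X] : Set (Completion X → Completion X) :=
  { h | Continuous h ∧ ∃ g : ℕ → X ≃ᵢ X, DivergentSeq g ∧
      Tendsto (fun n => hatIso (g n)) atTop (𝓝 h) }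

/-- The set `X_l ⊆ X̂` of limit points of the action `(Iso(X), X)` in the completion. -/
def Xl (X : Type*) [MetricSpace X] : Set (Completion X) :=
  { y | ∃ (g : ℕ → X ≃ᵢ X) (x : X), DivergentSeq g ∧
      CauchySeq (fun n => g n x) ∧
      Tendsto (fun n => ((g n x : X) : Completion X)) atTop (𝓝 y) }

/-- The set `X_p ⊆ X̂` of special limit points of the action `(Iso(X), X)`. -/
def Xp (X : Type*) [MetricSpace X] : Set (Completion X) :=
  { y | ∃ (g : ℕ → X ≃ᵢ X) (x : X), DivergentSeq g ∧
      CauchySeq (fun n => g n x) ∧ CauchySeq (fun n => (g n).symm x) ∧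
      Tendsto (fun n => ((g n x : X) : Completion X)) atTop (𝓝 y) }

/-- `X ∪ X_l`, with `X` identified with its image in the completion `X̂`. -/
def XcupXl (X : Type*) [MetricSpace X] : Set (Completion X) :=
  Set.range ((↑) : X → Completion X) ∪ Xl X

/-- `X ∪ X_p`, with `X` identified with its image in the completion `X̂`. -/
def XcupXp (X : Type*) [MetricSpace X] : Set (Completion X) :=
  Set.range ((↑) : X → Completion X) ∪ Xp X

/-- The Ellis semigroup is a group: every element has a two-sided inverse in `E`
(under composition). -/
def EllisIsGroup (X : Type*) [MetricSpace X] : Prop :=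
  ∀ f ∈ Ellis X, ∃ g ∈ Ellis X, f ∘ g = id ∧ g ∘ f = id

namespace EllisProof

variable {X : Type*} [MetricSpace X]

theorem hatIso_isometry (g : X ≃ᵢ X) : Isometry (hatIso g) :=
  g.isometry.completion_map

theorem hatIso_coe (g : X ≃ᵢ X) (x : X) :
    hatIso g (x : Completion X) = ((g x : X) : Completion X) :=
  Completion.map_coe g.isometry.uniformContinuous x

theorem hatIso_refl : hatIso (IsometryEquiv.refl X) = id := by
  have : ((IsometryEquiv.refl X : X ≃ᵢ X) : X → X) = id := by
    ext x; rfl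
  rw [hatIso, this, Completion.map_id]

theorem hatIso_mem_Ellis (g : X ≃ᵢ X) : hatIso g ∈ Ellis X :=
  subset_closure ⟨g, rfl⟩

theorem id_mem_Ellis : (id : Completion X → Completion X) ∈ Ellis X := by
  rw [← hatIso_refl]; exact hatIso_mem_Ellis _

theorem hatIso_comp (a g₀ : X ≃ᵢ X) : hatIso a ∘ hatIso g₀ = hatIso (g₀.trans a) := by
  rw [hatIso, hatIso, hatIso, Completion.map_comp a.isometry.uniformContinuous
    g₀.isometry.uniformContinuous]
  rfl

theorem ellis_isometry {f : Completion X → Completion X} (hf : f ∈ Ellis X) : Isometry f := by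
  apply Isometry.of_dist_eq; intro a b
  have hcl : IsClosed {F : Completion X → Completion X | dist (F a) (F b) = dist a b} :=
    isClosed_eq (Continuous.dist (continuous_apply a) (continuous_apply b)) continuous_const
  have hsub : hatIsoSet X ⊆ {F | dist (F a) (F b) = dist a b} := by
    rintro _ ⟨g, rfl⟩; exact (hatIso_isometry g).dist_eq a b
  exact closure_minimal hsub hcl hf

/-- The orbit of `y` under the Ellis group, as closure of the `Iso(X)`-image. -/
def orbit (y : Completion X) : Set (Completion X) :=
  closure (Set.range fun g : X ≃ᵢ X => hatIso g y)

theorem isClosed_orbit (y : Completion X) : IsClosed (orbit y) := isClosed_closure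

theorem self_mem_orbit (y : Completion X) : y ∈ orbit y :=
  subset_closure ⟨IsometryEquiv.refl X, by show hatIso _ y = y; rw [hatIso_refl]; rfl⟩

theorem eval_mem_orbit {f : Completion X → Completion X} (hf : f ∈ Ellis X)
    (y : Completion X) : f y ∈ orbit y := by
  have h1 : f y ∈ (fun F : Completion X → Completion X => F y) '' closure (hatIsoSet X) :=
    ⟨f, hf, rfl⟩
  have h2 := image_closure_subset_closure_image
    (f := fun F : Completion X → Completion X => F y) (continuous_apply y) h1
  have h3 : (fun F : Completion X → Completion X => F y) '' hatIsoSet X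
      = Set.range fun g : X ≃ᵢ X => hatIso g y := by
    rw [hatIsoSet, ← Set.range_comp]; rfl
  rwa [h3] at h2

theorem comp_mem_Ellis {f g : Completion X → Completion X}
    (hf : f ∈ Ellis X) (hg : g ∈ Ellis X) : f ∘ g ∈ Ellis X := by
  have step1 : ∀ g₀ : X ≃ᵢ X, f ∘ hatIso g₀ ∈ Ellis X := by
    intro g₀
    have hcont : Continuous fun F : Completion X → Completion X => F ∘ hatIso g₀ :=
      continuous_pi fun a => continuous_apply _
    have h1 : f ∘ hatIso g₀ ∈ (fun F : Completion X → Completion X => F ∘ hatIso g₀) ''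
        closure (hatIsoSet X) := ⟨f, hf, rfl⟩
    have h2 := image_closure_subset_closure_image hcont h1
    refine closure_mono ?_ h2
    rintro _ ⟨_, ⟨a, rfl⟩, rfl⟩
    exact ⟨g₀.trans a, (hatIso_comp a g₀).symm⟩
  have hcont2 : Continuous fun F : Completion X → Completion X => f ∘ F :=
    continuous_pi fun a => (ellis_isometry hf).continuous.comp (continuous_apply a)
  have h1 : f ∘ g ∈ (fun F : Completion X → Completion X => f ∘ F) ''
      closure (hatIsoSet X) := ⟨g, hg, rfl⟩
  have h2 := image_closure_subset_closure_image hcont2 h1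
  have h3 : closure ((fun F : Completion X → Completion X => f ∘ F) '' hatIsoSet X)
      ⊆ Ellis X := by
    rw [Ellis, ← closure_closure (s := hatIsoSet X)]
    apply closure_mono
    rintro _ ⟨_, ⟨a, rfl⟩, rfl⟩
    exact step1 a
  exact h3 h2

end EllisProof
namespace EllisProof2
open EllisProof

variable {X : Type*} [MetricSpace X]

theorem exists_tendsto_subseq_of_mapClusterPt
    [TopologicalSpace.SeparableSpace X] [Nonempty X]
    {g : ℕ → X ≃ᵢ X} {h : X ≃ᵢ X} (hc : MapClusterPt h atTop g) :
    ∃ φ : ℕ → ℕ, StrictMono φ ∧ Tendsto (g ∘ φ) atTop (𝓝 h) := by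
  obtain ⟨d, hd⟩ := TopologicalSpace.exists_dense_seq X
  have hcoe : Continuous fun g' : X ≃ᵢ X => (g' : X → X) := continuous_induced_dom
  have heval : ∀ x : X, Continuous fun g' : X ≃ᵢ X => g' x :=
    fun x => (continuous_apply x).comp hcoe
  set V : ℕ → Set (X ≃ᵢ X) := fun k =>
    ⋂ i ∈ Finset.range (k+1),
      (fun g' : X ≃ᵢ X => g' (d i)) ⁻¹' Metric.ball (h (d i)) (1/(k+1) : ℝ) with hV
  have hVopen : ∀ k, IsOpen (V k) := fun k =>
    isOpen_biInter_finset fun i _ => Metric.isOpen_ball.preimage (heval (d i))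
  have hVmem : ∀ k, h ∈ V k := by
    intro k
    refine Set.mem_iInter₂.mpr fun i _ => ?_
    simp only [Set.mem_preimage, Metric.mem_ball, dist_self]
    positivity
  have hfreq : ∀ k N, ∃ n, N ≤ n ∧ g n ∈ V k := by
    intro k N
    have h1 := (mapClusterPt_iff_frequently.mp hc) (V k) ((hVopen k).mem_nhds (hVmem k))
    obtain ⟨n, hn1, hn2⟩ := (frequently_atTop.mp h1) N
    exact ⟨n, hn1, hn2⟩
  choose F hF1 hF2 using hfreq
  let φ : ℕ → ℕ := fun k => Nat.rec (F 0 0) (fun k ih => F (k+1) (ih+1)) k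
  have hφsucc : ∀ k, φ (k+1) = F (k+1) (φ k + 1) := fun k => rfl
  have hφmono : StrictMono φ := strictMono_nat_of_lt_succ (by
    intro n
    rw [hφsucc]
    exact lt_of_lt_of_le (Nat.lt_succ_self _) (hF1 _ _))
  have hφV : ∀ k, g (φ k) ∈ V k := by
    intro k
    cases k with
    | zero => exact hF2 0 0
    | succ k => rw [hφsucc]; exact hF2 _ _
  refine ⟨φ, hφmono, ?_⟩
  have hind : IsInducing (fun g' : X ≃ᵢ X => (g' : X → X)) := ⟨rfl⟩
  rw [hind.tendsto_nhds_iff]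
  rw [tendsto_pi_nhds]
  intro x
  rw [Metric.tendsto_atTop]
  intro ε hε
  obtain ⟨i, hi⟩ := Metric.denseRange_iff.mp hd x (ε/3) (by linarith)
  obtain ⟨K₀, hK₀⟩ := exists_nat_one_div_lt (show (0:ℝ) < ε/3 by linarith)
  refine ⟨max i K₀, fun k hk => ?_⟩
  have hik : i ≤ k := le_trans (le_max_left _ _) hk
  have hKk : K₀ ≤ k := le_trans (le_max_right _ _) hk
  have h1 : dist (g (φ k) (d i)) (h (d i)) < (1/(k+1) : ℝ) := by
    have h2 := Set.mem_iInter₂.mp (hφV k) i (Finset.mem_range.mpr (Nat.lt_succ_of_le hik))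
    simpa only [Set.mem_preimage, Metric.mem_ball] using h2
  have h2 : (1:ℝ)/(k+1) ≤ 1/(K₀+1) := by
    apply one_div_le_one_div_of_le
    · positivity
    · have : (K₀:ℝ) ≤ (k:ℝ) := by exact_mod_cast hKk
      linarith
  have h3 : dist (g (φ k) x) (g (φ k) (d i)) = dist x (d i) := (g (φ k)).dist_eq x (d i)
  have h4 : dist (h (d i)) (h x) = dist (d i) x := h.dist_eq (d i) x
  have h5 := dist_triangle4 (g (φ k) x) (g (φ k) (d i)) (h (d i)) (h x)
  have h6 : dist (d i) x < ε/3 := by rw [dist_comm]; exact hi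
  show dist (g (φ k) x) (h x) < ε
  rw [h3, h4] at h5
  linarith
theorem divergentSeq_to_net [TopologicalSpace.SeparableSpace X] [Nonempty X]
    {g : ℕ → X ≃ᵢ X} (hg : DivergentSeq g) : DivergentNet g := by
  intro h hc
  obtain ⟨φ, hφ, htd⟩ := exists_tendsto_subseq_of_mapClusterPt hc
  exact hg φ hφ h htd

end EllisProof2
namespace EllisProof2b
open EllisProof EllisProof2

theorem map_ulift_atTop {α : Type*} (u : ℕ → α) :
    Filter.map (u ∘ (ULift.down : ULift.{v} ℕ → ℕ)) atTop = Filter.map u atTop := by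
  let e : ℕ ≃o ULift.{v} ℕ := { toEquiv := Equiv.ulift.symm, map_rel_iff' := Iff.rfl }
  have hmap : Filter.map (e : ℕ → ULift.{v} ℕ) atTop = atTop := e.map_atTop
  rw [← hmap, Filter.map_map]
  rfl

variable {X : Type*} [MetricSpace X]

theorem cauchySeq_of_CI (hCI : IsoCauchyIndivisible X) {g : ℕ → X ≃ᵢ X}
    (hdiv : DivergentNet g) {x : X} (hx : CauchySeq fun n => g n x) (z : X) :
    CauchySeq fun n => g n z := by
  haveI : IsDirected (ULift ℕ) (· ≤ ·) :=
    ⟨fun a b => ⟨⟨max a.down b.down⟩, le_max_left _ _, le_max_right _ _⟩⟩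
  have hdiv' : DivergentNet fun i : ULift ℕ => g i.down := by
    intro h hc
    have hc2 : ClusterPt h (Filter.map (g ∘ ULift.down) atTop) := hc
    rw [map_ulift_atTop g] at hc2
    exact hdiv h hc2
  have hres := hCI (ULift ℕ) (fun i => g i.down) hdiv' ⟨x, ?_⟩ z
  · have hres2 : Cauchy (Filter.map ((fun n => g n z) ∘ ULift.down) atTop) := hres
    rw [map_ulift_atTop] at hres2
    exact hres2
  · show Cauchy (Filter.map ((fun n => g n x) ∘ ULift.down) atTop)
    rw [map_ulift_atTop]
    exact hx

end EllisProof2b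
namespace EllisProof3
open EllisProof EllisProof2

variable {X : Type*} [MetricSpace X]

theorem keyA [TopologicalSpace.SeparableSpace X] (hCI : IsoCauchyIndivisible X)
    (x : X) (s : Completion X) (hs : s ∈ orbit ((x : X) : Completion X)) :
    (∃ f ∈ Ellis X, f ((x : X) : Completion X) = s) ∧ s ∈ XcupXl X := by
  haveI : Nonempty X := ⟨x⟩
  obtain ⟨u, hu, hus⟩ := mem_closure_iff_seq_limit.mp hs
  choose g hg using hu
  have hg' : ∀ n, hatIso (g n) ((x : X) : Completion X) = u n := hg
  have hux : (fun n => ((g n x : X) : Completion X)) = u := by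
    funext n
    rw [← hg' n, hatIso_coe]
  have htd : Tendsto (fun n => ((g n x : X) : Completion X)) atTop (𝓝 s) := by
    rw [hux]; exact hus
  by_cases hdiv : DivergentSeq g
  · -- divergent case
    have hcs : CauchySeq fun n => g n x := by
      have hcs' : CauchySeq fun n => ((g n x : X) : Completion X) := htd.cauchySeq
      rw [Metric.cauchySeq_iff] at hcs' ⊢
      intro ε hε
      obtain ⟨N, hN⟩ := hcs' ε hε
      refine ⟨N, fun m hm n hn => ?_⟩
      have h1 := hN m hm n hn
      rwa [Completion.dist_eq] at h1
    have hdivnet : DivergentNet g := divergentSeq_to_net hdiv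
    have hall : ∀ z : X, CauchySeq fun n => g n z := fun z => EllisProof2b.cauchySeq_of_CI hCI hdivnet hcs z
    have hcomp : ∀ a : Completion X, CauchySeq fun n => hatIso (g n) a := by
      intro a
      rw [Metric.cauchySeq_iff]
      intro ε hε
      obtain ⟨z, hz⟩ := Metric.denseRange_iff.mp Completion.denseRange_coe a (ε/4) (by linarith)
      obtain ⟨N, hN⟩ := Metric.cauchySeq_iff.mp (hall z) (ε/4) (by linarith)
      refine ⟨N, fun m hm n hn => ?_⟩
      have e1 : dist (hatIso (g m) a) (hatIso (g m) (z : Completion X)) = dist a (z : Completion X) :=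
        (hatIso_isometry (g m)).dist_eq a _
      have e3 : dist (hatIso (g n) (z : Completion X)) (hatIso (g n) a) = dist a (z : Completion X) := by
        rw [(hatIso_isometry (g n)).dist_eq, dist_comm]
      have e2 : dist (hatIso (g m) (z : Completion X)) (hatIso (g n) (z : Completion X)) < ε/4 := by
        rw [hatIso_coe, hatIso_coe, Completion.dist_eq]
        exact hN m hm n hn
      have h5 := dist_triangle4 (hatIso (g m) a) (hatIso (g m) (z : Completion X))
        (hatIso (g n) (z : Completion X)) (hatIso (g n) a)
      rw [e1, e3] at h5
      linarith
    choose flim hflim using fun a => cauchySeq_tendsto_of_complete (hcomp a)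
    have hmem : flim ∈ Ellis X := by
      apply mem_closure_of_tendsto (tendsto_pi_nhds.mpr hflim)
      exact Filter.Eventually.of_forall fun n => ⟨g n, rfl⟩
    have hfx : flim ((x : X) : Completion X) = s := by
      refine tendsto_nhds_unique ?_ htd
      have h1 := hflim ((x : X) : Completion X)
      simpa only [hatIso_coe] using h1
    exact ⟨⟨flim, hmem, hfx⟩, Or.inr ⟨g, x, hdiv, hcs, htd⟩⟩
  · -- convergent-subsequence case
    simp only [DivergentSeq, not_forall, not_not] at hdiv
    obtain ⟨φ, hφ, h, hth⟩ := hdiv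
    have hcoe : Continuous fun g' : X ≃ᵢ X => (g' : X → X) := continuous_induced_dom
    have heval : Tendsto (fun n => g (φ n) x) atTop (𝓝 (h x)) :=
      (((continuous_apply x).comp hcoe).tendsto h).comp hth
    have hC : Tendsto (fun n => ((g (φ n) x : X) : Completion X)) atTop
        (𝓝 ((h x : X) : Completion X)) :=
      ((Completion.continuous_coe X).tendsto _).comp heval
    have hs2 : Tendsto (fun n => ((g (φ n) x : X) : Completion X)) atTop (𝓝 s) :=
      htd.comp hφ.tendsto_atTop
    have hsx : s = ((h x : X) : Completion X) := tendsto_nhds_unique hs2 hC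
    refine ⟨⟨hatIso h, hatIso_mem_Ellis h, ?_⟩, Or.inl ⟨h x, hsx.symm⟩⟩
    rw [hatIso_coe, ← hsx]

end EllisProof3
namespace EllisProof4
open EllisProof EllisProof3

variable {X : Type*} [MetricSpace X]

theorem orbit_subset_orbit {y s : Completion X} (h : ∃ f ∈ Ellis X, f y = s) :
    orbit s ⊆ orbit y := by
  obtain ⟨f, hf, rfl⟩ := h
  refine closure_minimal ?_ (isClosed_orbit y)
  rintro _ ⟨g, rfl⟩
  exact eval_mem_orbit (comp_mem_Ellis (hatIso_mem_Ellis g) hf) y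

variable [TopologicalSpace.SeparableSpace X]

theorem exists_rep (hCI : IsoCauchyIndivisible X) (hgrp : EllisIsGroup X)
    {y : Completion X} (hy : y ∈ XcupXl X) :
    ∃ x : X, (∃ f ∈ Ellis X, f ((x : X) : Completion X) = y) ∧
      ∃ f' ∈ Ellis X, f' y = ((x : X) : Completion X) := by
  rcases hy with ⟨x, rfl⟩ | hy
  · exact ⟨x, ⟨id, id_mem_Ellis, rfl⟩, ⟨id, id_mem_Ellis, rfl⟩⟩
  · obtain ⟨g, x, hdiv, hcau, htd⟩ := hy
    have hmem : y ∈ orbit ((x : X) : Completion X) := by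
      apply mem_closure_of_tendsto htd
      filter_upwards with n
      exact ⟨g n, hatIso_coe (g n) x⟩
    obtain ⟨⟨f, hf, hfx⟩, -⟩ := keyA hCI x y hmem
    obtain ⟨f', hf', hff1, hff2⟩ := hgrp f hf
    refine ⟨x, ⟨f, hf, hfx⟩, ⟨f', hf', ?_⟩⟩
    rw [← hfx]
    exact congrFun hff2 _

omit [TopologicalSpace.SeparableSpace X] in
theorem orbit_eq_rep {y : Completion X} {x : X}
    (h1 : ∃ f ∈ Ellis X, f ((x : X) : Completion X) = y)
    (h2 : ∃ f' ∈ Ellis X, f' y = ((x : X) : Completion X)) :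
    orbit y = orbit ((x : X) : Completion X) :=
  Set.Subset.antisymm (orbit_subset_orbit h1) (orbit_subset_orbit h2)

theorem orbit_mem_iff (hCI : IsoCauchyIndivisible X) (hgrp : EllisIsGroup X)
    {y : Completion X} (hy : y ∈ XcupXl X) {s : Completion X} :
    s ∈ orbit y ↔ ∃ f ∈ Ellis X, f y = s := by
  constructor
  · intro hs
    obtain ⟨x, h1, h2⟩ := exists_rep hCI hgrp hy
    rw [orbit_eq_rep h1 h2] at hs
    obtain ⟨⟨f2, hf2, hf2x⟩, -⟩ := keyA hCI x s hs
    obtain ⟨f', hf', hfy⟩ := h2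
    refine ⟨f2 ∘ f', comp_mem_Ellis hf2 hf', ?_⟩
    show f2 (f' y) = s
    rw [hfy, hf2x]
  · rintro ⟨f, hf, rfl⟩
    exact eval_mem_orbit hf y

theorem orbit_subset_XcupXl (hCI : IsoCauchyIndivisible X) (hgrp : EllisIsGroup X)
    {y : Completion X} (hy : y ∈ XcupXl X) : orbit y ⊆ XcupXl X := by
  obtain ⟨x, h1, h2⟩ := exists_rep hCI hgrp hy
  rw [orbit_eq_rep h1 h2]
  intro s hs
  exact (keyA hCI x s hs).2

theorem orbit_invariant (hCI : IsoCauchyIndivisible X) (hgrp : EllisIsGroup X)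
    {y s : Completion X} (hy : y ∈ XcupXl X) (hs : s ∈ orbit y) :
    orbit s = orbit y := by
  obtain ⟨f, hf, hfy⟩ := (orbit_mem_iff hCI hgrp hy).mp hs
  obtain ⟨f', hf', hc1, hc2⟩ := hgrp f hf
  have h2 : ∃ f' ∈ Ellis X, f' s = y := ⟨f', hf', by rw [← hfy]; exact congrFun hc2 y⟩
  exact Set.Subset.antisymm (orbit_subset_orbit ⟨f, hf, hfy⟩) (orbit_subset_orbit h2)

end EllisProof4
namespace EllisProof5
open EllisProof

theorem closure_inter_open_nonempty {α : Type*} [TopologicalSpace α] {R V : Set α}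
    (hV : IsOpen V) : (closure R ∩ V).Nonempty ↔ (R ∩ V).Nonempty := by
  constructor
  · rintro ⟨z, hzR, hzV⟩
    obtain ⟨w, hw1, hw2⟩ := mem_closure_iff.mp hzR V hV hzV
    exact ⟨w, hw2, hw1⟩
  · rintro ⟨z, hzR, hzV⟩
    exact ⟨z, subset_closure hzR, hzV⟩

theorem closure_inter_open_eq {α : Type*} [TopologicalSpace α] {R V : Set α}
    (hV : IsOpen V) : closure (closure R ∩ V) = closure (R ∩ V) := by
  apply Set.Subset.antisymm
  · refine closure_minimal ?_ isClosed_closure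
    intro z hz
    have h2 := hV.inter_closure ⟨hz.2, hz.1⟩
    rwa [Set.inter_comm V R] at h2
  · exact closure_mono (Set.inter_subset_inter_left _ subset_closure)

variable {X : Type*} [MetricSpace X] (D : ℕ → Completion X)

def chain (C : Set (Completion X)) : ℕ → Set (Completion X)
  | 0 => C
  | k+1 =>
    chain C k ∩
      Metric.ball (D (sInf {n | (chain C k ∩ Metric.ball (D n) ((2⁻¹:ℝ)^(k+1))).Nonempty}))
        ((2⁻¹:ℝ)^(k+1))

def idx (C : Set (Completion X)) (k : ℕ) : ℕ :=
  sInf {n | (chain D C k ∩ Metric.ball (D n) ((2⁻¹:ℝ)^(k+1))).Nonempty}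

theorem chain_succ (C : Set (Completion X)) (k : ℕ) :
    chain D C (k+1) = chain D C k ∩ Metric.ball (D (idx D C k)) ((2⁻¹:ℝ)^(k+1)) := rfl

theorem chain_antitone (C : Set (Completion X)) : Antitone (chain D C) :=
  antitone_nat_of_succ_le fun n => by rw [chain_succ]; exact Set.inter_subset_left

theorem chain_subset_base (C : Set (Completion X)) (k : ℕ) : chain D C k ⊆ C :=
  chain_antitone D C (Nat.zero_le k)

theorem chain_nonempty (hD : DenseRange D) (C : Set (Completion X)) (hC : C.Nonempty) :
    ∀ k, (chain D C k).Nonempty := by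
  intro k
  induction k with
  | zero => exact hC
  | succ k ih =>
    obtain ⟨z, hz⟩ := ih
    have hr : (0:ℝ) < (2⁻¹:ℝ)^(k+1) := by positivity
    obtain ⟨n, hn⟩ := Metric.denseRange_iff.mp hD z _ hr
    have hT : {n | (chain D C k ∩ Metric.ball (D n) ((2⁻¹:ℝ)^(k+1))).Nonempty}.Nonempty :=
      ⟨n, ⟨z, hz, by rwa [Metric.mem_ball]⟩⟩
    exact Nat.sInf_mem hT

def Uball (m : ℕ → ℕ) (k : ℕ) : Set (Completion X) :=
  ⋂ j ∈ Finset.range k, Metric.ball (D (m j)) ((2⁻¹:ℝ)^(j+1))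

theorem Uball_isOpen (m : ℕ → ℕ) (k : ℕ) : IsOpen (Uball D m k) :=
  isOpen_biInter_finset fun _ _ => Metric.isOpen_ball

theorem Uball_zero (m : ℕ → ℕ) : Uball D m 0 = Set.univ := by
  simp [Uball]

theorem Uball_succ (m : ℕ → ℕ) (k : ℕ) :
    Uball D m (k+1) = Metric.ball (D (m k)) ((2⁻¹:ℝ)^(k+1)) ∩ Uball D m k := by
  rw [Uball, Uball, Finset.range_add_one, Finset.set_biInter_insert]

theorem chain_eq (C : Set (Completion X)) (m : ℕ → ℕ) :
    ∀ k, (∀ j < k, idx D C j = m j) → chain D C k = C ∩ Uball D m k := by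
  intro k
  induction k with
  | zero => intro _; rw [Uball_zero, Set.inter_univ]; rfl
  | succ k ih =>
    intro h
    rw [chain_succ, ih (fun j hj => h j (Nat.lt_succ_of_lt hj)), Uball_succ,
      h k (Nat.lt_succ_self k)]
    ext z
    simp only [Set.mem_inter_iff]
    tauto

theorem exists_unique_pt (hD : DenseRange D) {C : Set (Completion X)}
    (hcl : IsClosed C) (hne : C.Nonempty) :
    ∃ p, p ∈ C ∧ (∀ k, p ∈ closure (chain D C (k+1))) ∧
      ∀ q, (∀ k, q ∈ closure (chain D C (k+1))) → q = p := by
  have hch := chain_nonempty D hD C hne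
  choose z hz using fun k => hch (k+1)
  have hmem2 : ∀ k l, k ≤ l → z l ∈ chain D C (k+1) := fun k l h =>
    chain_antitone D C (Nat.succ_le_succ h) (hz l)
  have hball : ∀ k w, w ∈ chain D C (k+1) → dist w (D (idx D C k)) < (2⁻¹:ℝ)^(k+1) := by
    intro k w hw
    rw [chain_succ] at hw
    exact Metric.mem_ball.mp hw.2
  have hpow : ∀ k : ℕ, (2⁻¹:ℝ)^(k+1) + (2⁻¹:ℝ)^(k+1) = (2⁻¹:ℝ)^k := by
    intro k; rw [pow_succ]; ring
  have hdistlt : ∀ k w w', w ∈ chain D C (k+1) → w' ∈ chain D C (k+1) →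
      dist w w' ≤ (2⁻¹:ℝ)^k := by
    intro k w w' hw hw'
    have h1 := hball k w hw
    have h2 := hball k w' hw'
    have h4 := dist_triangle w (D (idx D C k)) w'
    have h3 : dist (D (idx D C k)) w' = dist w' (D (idx D C k)) := dist_comm _ _
    have h5 := hpow k
    linarith
  have hcauchy : CauchySeq z := by
    apply cauchySeq_of_le_tendsto_0 (fun k => (2⁻¹:ℝ)^k)
    · intro n m N hn hm
      exact hdistlt N (z n) (z m) (hmem2 N n hn) (hmem2 N m hm)
    · exact tendsto_pow_atTop_nhds_zero_of_lt_one (by norm_num) (by norm_num)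
  obtain ⟨p, hp⟩ := cauchySeq_tendsto_of_complete hcauchy
  have hpk : ∀ k, p ∈ closure (chain D C (k+1)) := by
    intro k
    apply mem_closure_of_tendsto hp
    filter_upwards [eventually_ge_atTop k] with l hl
    exact hmem2 k l hl
  have hpC : p ∈ C := by
    have h1 : closure (chain D C 1) ⊆ closure C := closure_mono (chain_subset_base D C 1)
    have h2 := h1 (hpk 0)
    rwa [hcl.closure_eq] at h2
  refine ⟨p, hpC, hpk, ?_⟩
  intro q hq
  have hcball : ∀ k, closure (chain D C (k+1)) ⊆
      Metric.closedBall (D (idx D C k)) ((2⁻¹:ℝ)^(k+1)) := by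
    intro k
    apply closure_minimal ?_ Metric.isClosed_closedBall
    intro w' hw'
    exact Metric.ball_subset_closedBall (by rw [chain_succ] at hw'; exact hw'.2)
  have hd : ∀ k, dist q p ≤ (2⁻¹:ℝ)^k := by
    intro k
    have h1 := Metric.mem_closedBall.mp (hcball k (hq k))
    have h2 := Metric.mem_closedBall.mp (hcball k (hpk k))
    have h4 := dist_triangle q (D (idx D C k)) p
    have h3 : dist (D (idx D C k)) p = dist p (D (idx D C k)) := dist_comm _ _
    have h5 := hpow k
    linarith
  have hle : dist q p ≤ 0 :=
    ge_of_tendsto (tendsto_pow_atTop_nhds_zero_of_lt_one (by norm_num : (0:ℝ) ≤ 2⁻¹)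
      (by norm_num)) (Filter.Eventually.of_forall hd)
  exact dist_le_zero.mp hle

end EllisProof5
namespace EllisProof6
open EllisProof EllisProof5

theorem sInf_eq_iff' {T : Set ℕ} {m : ℕ} :
    sInf T = m ↔ (m ∈ T ∧ ∀ k < m, k ∉ T) ∨ (m = 0 ∧ ∀ n, n ∉ T) := by
  constructor
  · rintro rfl
    by_cases hT : T.Nonempty
    · exact Or.inl ⟨Nat.sInf_mem hT, fun k hk => Nat.notMem_of_lt_sInf hk⟩
    · have hTe : T = ∅ := Set.not_nonempty_iff_eq_empty.mp hT
      refine Or.inr ⟨?_, ?_⟩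
      · rw [hTe, Nat.sInf_empty]
      · intro n; rw [hTe]; exact Set.notMem_empty n
  · rintro (⟨hm, hlt⟩ | ⟨rfl, hall⟩)
    · refine le_antisymm (Nat.sInf_le hm) (le_of_not_gt fun hc => ?_)
      exact hlt _ hc (Nat.sInf_mem ⟨m, hm⟩)
    · have hTe : T = ∅ := Set.eq_empty_iff_forall_notMem.mpr hall
      rw [hTe, Nat.sInf_empty]

theorem measurable_sInf_eq {α : Type*} {mα : MeasurableSpace α} {T : α → Set ℕ}
    (hT : ∀ n, MeasurableSet {w | n ∈ T w}) (c : ℕ) :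
    MeasurableSet {w | sInf (T w) = c} := by
  have heq : {w | sInf (T w) = c} =
      ({w | c ∈ T w} ∩ ⋂ k, ⋂ _ : k < c, {w | k ∈ T w}ᶜ) ∪
      ({w : α | c = 0} ∩ ⋂ n, {w | n ∈ T w}ᶜ) := by
    ext w
    simp only [Set.mem_setOf_eq, Set.mem_union, Set.mem_inter_iff, Set.mem_iInter,
      Set.mem_compl_iff]
    rw [sInf_eq_iff']
  rw [heq]
  apply MeasurableSet.union
  · exact (hT c).inter (MeasurableSet.iInter fun k => MeasurableSet.iInter fun _ => (hT k).compl)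
  · refine MeasurableSet.inter ?_ (MeasurableSet.iInter fun n => (hT n).compl)
    by_cases h : c = 0
    · simp only [h, Set.setOf_true]; exact MeasurableSet.univ
    · simp only [h, Set.setOf_false]; exact MeasurableSet.empty

variable {X : Type*} [MetricSpace X] (D : ℕ → Completion X)

theorem isOpen_orbit_inter {V : Set (Completion X)} (hV : IsOpen V) :
    IsOpen {w : Completion X | (orbit w ∩ V).Nonempty} := by
  have heq : {w : Completion X | (orbit w ∩ V).Nonempty} =
      ⋃ g : X ≃ᵢ X, (fun w => hatIso g w) ⁻¹' V := by
    ext w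
    simp only [Set.mem_setOf_eq, Set.mem_iUnion, Set.mem_preimage]
    rw [orbit, closure_inter_open_nonempty hV]
    constructor
    · rintro ⟨z, ⟨g, rfl⟩, hzV⟩; exact ⟨g, hzV⟩
    · rintro ⟨g, hg⟩; exact ⟨hatIso g w, ⟨g, rfl⟩, hg⟩
  rw [heq]
  exact isOpen_iUnion fun g => hV.preimage (hatIso_isometry g).continuous

theorem measA : ∀ (k : ℕ) (m : ℕ → ℕ),
    @MeasurableSet _ (borel (Completion X)) {w | ∀ j < k, idx D (orbit w) j = m j} := by
  intro k
  induction k with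
  | zero =>
    intro m
    have huniv : {w : Completion X | ∀ j < 0, idx D (orbit w) j = m j} = Set.univ := by
      ext w; simp
    rw [huniv]
    exact MeasurableSet.univ
  | succ k ih =>
    intro m
    have heq : {w : Completion X | ∀ j < k+1, idx D (orbit w) j = m j} =
        {w | ∀ j < k, idx D (orbit w) j = m j} ∩
        {w | sInf {n | (orbit w ∩ (Uball D m k ∩ Metric.ball (D n) ((2⁻¹:ℝ)^(k+1)))).Nonempty}
          = m k} := by
      ext w
      simp only [Set.mem_inter_iff, Set.mem_setOf_eq]
      have hkey : ∀ (hA : ∀ j < k, idx D (orbit w) j = m j),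
          idx D (orbit w) k =
          sInf {n | (orbit w ∩ (Uball D m k ∩ Metric.ball (D n) ((2⁻¹:ℝ)^(k+1)))).Nonempty} := by
        intro hA
        have hc := chain_eq D (orbit w) m k hA
        simp only [idx, hc, Set.inter_assoc]
      constructor
      · intro h
        have hA : ∀ j < k, idx D (orbit w) j = m j := fun j hj => h j (Nat.lt_succ_of_lt hj)
        exact ⟨hA, by rw [← hkey hA]; exact h k (Nat.lt_succ_self k)⟩
      · rintro ⟨hA, hs⟩
        intro j hj
        rcases Nat.lt_succ_iff_lt_or_eq.mp hj with hj' | rfl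
        · exact hA j hj'
        · rw [hkey hA]; exact hs
    rw [heq]
    refine (ih m).inter ?_
    refine measurable_sInf_eq (T := fun w =>
      {n | (orbit w ∩ (Uball D m k ∩ Metric.ball (D n) ((2⁻¹:ℝ)^(k+1)))).Nonempty}) ?_ (m k)
    intro n
    exact MeasurableSpace.measurableSet_generateFrom
      (isOpen_orbit_inter ((Uball_isOpen D m k).inter Metric.isOpen_ball))

def Sam : Set (Completion X) := {w | ∀ k, w ∈ closure (chain D (orbit w) (k+1))}

theorem measurable_Sam : @MeasurableSet _ (borel (Completion X)) (Sam D) := by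
  have hSam : Sam D = ⋂ k, ⋂ i : ℕ, ⋃ m : Fin (k+1) → ℕ,
      ({w | ∀ j < k+1, idx D (orbit w) j =
          (fun j' => if h : j' < k+1 then m ⟨j', h⟩ else 0) j} ∩
       {w | ∃ g : X ≃ᵢ X,
          hatIso g w ∈ Uball D (fun j' => if h : j' < k+1 then m ⟨j', h⟩ else 0) (k+1) ∧
          dist (hatIso g w) w < 1/(i+1)}) := by
    ext w
    simp only [Sam, Set.mem_setOf_eq, Set.mem_iInter, Set.mem_iUnion, Set.mem_inter_iff]
    constructor
    · intro h k i
      refine ⟨fun j : Fin (k+1) => idx D (orbit w) j, ?_, ?_⟩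
      · intro j hj
        simp only [hj, dif_pos]
      · set m' : ℕ → ℕ := fun j' => if h' : j' < k+1 then idx D (orbit w) j' else 0 with hm'
        have hA : ∀ j < k+1, idx D (orbit w) j = m' j := by
          intro j hj; simp only [hm', hj, dif_pos]
        have hc := chain_eq D (orbit w) m' (k+1) hA
        have h2 : w ∈ closure (Set.range (fun g : X ≃ᵢ X => hatIso g w) ∩
            Uball D m' (k+1)) := by
          have h3 := h k
          rw [hc] at h3
          have h4 : w ∈ closure (closure (Set.range fun g : X ≃ᵢ X => hatIso g w) ∩
              Uball D m' (k+1)) := h3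
          rwa [closure_inter_open_eq (Uball_isOpen D m' (k+1))] at h4
        obtain ⟨z, hz, hdist⟩ := Metric.mem_closure_iff.mp h2 (1/(i+1)) (by positivity)
        obtain ⟨⟨g, rfl⟩, hzU⟩ := hz
        exact ⟨g, hzU, by rwa [dist_comm] at hdist⟩
    · intro h k
      rw [Metric.mem_closure_iff]
      intro ε hε
      obtain ⟨i, hi⟩ := exists_nat_one_div_lt hε
      obtain ⟨m, hA, g, hgU, hgd⟩ := h k i
      have hc := chain_eq D (orbit w)
        (fun j' => if h' : j' < k+1 then m ⟨j', h'⟩ else 0) (k+1) hA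
      refine ⟨hatIso g w, ?_, ?_⟩
      · rw [hc]
        exact ⟨subset_closure ⟨g, rfl⟩, hgU⟩
      · rw [dist_comm]
        calc dist (hatIso g w) w < 1/(i+1) := hgd
          _ < ε := hi
  rw [hSam]
  apply MeasurableSet.iInter; intro k
  apply MeasurableSet.iInter; intro i
  apply MeasurableSet.iUnion; intro m
  refine (measA D (k+1) _).inter (MeasurableSpace.measurableSet_generateFrom ?_)
  simp only [Set.mem_setOf_eq]
  have heq : {w | ∃ g : X ≃ᵢ X,
      hatIso g w ∈ Uball D (fun j' => if h : j' < k+1 then m ⟨j', h⟩ else 0) (k+1) ∧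
      dist (hatIso g w) w < 1/(i+1)} =
      ⋃ g : X ≃ᵢ X,
        ((fun w => hatIso g w) ⁻¹'
          Uball D (fun j' => if h : j' < k+1 then m ⟨j', h⟩ else 0) (k+1) ∩
         {w | dist (hatIso g w) w < 1/(i+1)}) := by
    ext w
    simp only [Set.mem_setOf_eq, Set.mem_iUnion, Set.mem_inter_iff, Set.mem_preimage]
  rw [heq]
  apply isOpen_iUnion; intro g
  refine ((Uball_isOpen D _ (k+1)).preimage (hatIso_isometry g).continuous).inter ?_
  exact isOpen_lt (Continuous.dist (hatIso_isometry g).continuous continuous_id) continuous_const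

end EllisProof6
/-- Proposition 7.1: if the Ellis semigroup `E` is a group, then the action of `E` on
`X ∪ X_l` has a Borel section: a Borel subset of `X ∪ X_l` (with the subspace
topology) meeting every `E`-orbit in exactly one point. -/
theorem ellis_action_has_borel_section (X : Type*) [MetricSpace X]
    [TopologicalSpace.SeparableSpace X] (hCI : IsoCauchyIndivisible X)
    (hgrp : EllisIsGroup X) :
    ∃ S : Set ↥(XcupXl X), @MeasurableSet _ (borel ↥(XcupXl X)) S ∧
      ∀ y : ↥(XcupXl X), ∃! s : ↥(XcupXl X), s ∈ S ∧
        ∃ f ∈ Ellis X, f (y : Completion X) = (s : Completion X) := by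
  classical
  rcases isEmpty_or_nonempty X with hX | hX
  · refine ⟨∅, @MeasurableSet.empty _ (borel ↥(XcupXl X)), ?_⟩
    intro y
    exfalso
    rcases y.2 with ⟨x, -⟩ | ⟨g, x, -, -, -⟩
    · exact hX.false x
    · exact hX.false x
  · haveI : Nonempty (Completion X) := ⟨((Classical.arbitrary X : X) : Completion X)⟩
    obtain ⟨D, hD⟩ := TopologicalSpace.exists_dense_seq (Completion X)
    refine ⟨(fun y : ↥(XcupXl X) => (y : Completion X)) ⁻¹' EllisProof6.Sam D, ?_, ?_⟩
    · have hmeas : @Measurable ↥(XcupXl X) (Completion X)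
          (borel ↥(XcupXl X)) (borel (Completion X))
          (fun y : ↥(XcupXl X) => (y : Completion X)) :=
        Continuous.borel_measurable continuous_subtype_val
      exact hmeas (EllisProof6.measurable_Sam D)
    · intro y
      have hy : (y : Completion X) ∈ XcupXl X := y.2
      have horb_ne : (EllisProof.orbit (y : Completion X)).Nonempty :=
        ⟨_, EllisProof.self_mem_orbit _⟩
      obtain ⟨p, hpC, hpk, huniq⟩ := EllisProof5.exists_unique_pt D hD
        (EllisProof.isClosed_orbit (y : Completion X)) horb_ne
      have hpY : p ∈ XcupXl X := EllisProof4.orbit_subset_XcupXl hCI hgrp hy hpC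
      have horb_p : EllisProof.orbit p = EllisProof.orbit (y : Completion X) :=
        EllisProof4.orbit_invariant hCI hgrp hy hpC
      refine ⟨⟨p, hpY⟩, ⟨?_, ?_⟩, ?_⟩
      · show p ∈ EllisProof6.Sam D
        intro k
        rw [horb_p]
        exact hpk k
      · exact (EllisProof4.orbit_mem_iff hCI hgrp hy).mp hpC
      · rintro ⟨q, hqY⟩ ⟨hqS, f, hf, hfq⟩
        have hq_orb : q ∈ EllisProof.orbit (y : Completion X) :=
          (EllisProof4.orbit_mem_iff hCI hgrp hy).mpr ⟨f, hf, hfq⟩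
        have horb_q : EllisProof.orbit q = EllisProof.orbit (y : Completion X) :=
          EllisProof4.orbit_invariant hCI hgrp hy hq_orb
        have hqSam : q ∈ EllisProof6.Sam D := hqS
        have hqk : ∀ k, q ∈ closure (EllisProof5.chain D
            (EllisProof.orbit (y : Completion X)) (k+1)) := by
          intro k
          have h1 := hqSam k
          rwa [horb_q] at h1
        exact Subtype.ext (huniq q hqk)

end
end

section
/- Let G be a locally compact group acting properly and continuously on a locally compact Hausdorff space X, suppose the orbit space G\X is paracompact, and let S be a section for the action (G,X). Then: (i) for every open neighborhood U of S there exist a closed fundamental set F_c and an open fundamental set F_o with F_c ⊆ F_o ⊆ U; (ii) if moreover (X,d) is a separable metric space, then there exists a Borel section S_B which is also a fundamental set and satisfies S_B ⊆ F_c ⊆ F_o ⊆ U. -/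
open Filter Topology Set

/-- The transporter `G_{AB} = { g ∈ G : gA ∩ B ≠ ∅ }` from `A` to `B`. -/
def Transporter (G : Type*) {X : Type*} [SMul G X] (A B : Set X) : Set G :=
  { g : G | ∃ a ∈ A, g • a ∈ B }

/-- A fundamental set for the action of `G` on `X`: `GF = X`, and every point has a
neighborhood `V` whose transporter to `F` has compact closure in `G`. -/
def IsFundamentalSet (G : Type*) {X : Type*} [TopologicalSpace G] [TopologicalSpace X]
    [SMul G X] (F : Set X) : Prop :=
  (∀ x : X, ∃ g : G, ∃ y ∈ F, g • y = x) ∧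
  ∀ x : X, ∃ V ∈ 𝓝 x, IsCompact (closure (Transporter G V F))

/-- The saturation of a set under the orbit equivalence relation. -/
def OrbSat (G : Type*) {X : Type*} [Group G] [MulAction G X] (E : Set X) : Set X :=
  { z : X | ∃ e ∈ E, e ∈ MulAction.orbit G z }

set_option linter.unusedSectionVars false

section Aux

variable {G X : Type*} [Group G] [TopologicalSpace G] [IsTopologicalGroup G]
  [TopologicalSpace X] [T2Space X] [MulAction G X] [ContinuousSMul G X]

theorem transporter_mono {A A' B B' : Set X} (hA : A ⊆ A') (hB : B ⊆ B') :
    Transporter G A B ⊆ Transporter G A' B' :=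
  fun _ ⟨a, ha, hb⟩ => ⟨a, hA ha, hB hb⟩

theorem isCompact_transporter
    (hproper : IsProperMap (fun p : G × X => (p.2, p.1 • p.2)))
    {K L : Set X} (hK : IsCompact K) (hL : IsCompact L) :
    IsCompact (Transporter G K L) := by
  have heq : Transporter G K L
      = Prod.fst '' ((fun p : G × X => (p.2, p.1 • p.2)) ⁻¹' (K ×ˢ L)) := by
    ext g
    constructor
    · rintro ⟨a, ha, hb⟩; exact ⟨(g, a), ⟨ha, hb⟩, rfl⟩
    · rintro ⟨⟨g', a⟩, ⟨ha, hb⟩, rfl⟩; exact ⟨a, ha, hb⟩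
  rw [heq]
  exact (hproper.isCompact_preimage (hK.prod hL)).image continuous_fst

theorem isCompact_closure_transporter
    (hproper : IsProperMap (fun p : G × X => (p.2, p.1 • p.2)))
    {K L : Set X} (hK : IsCompact K) (hL : IsCompact L) :
    IsCompact (closure (Transporter G K L)) :=
  (isCompact_transporter hproper hK hL).closure

theorem subset_orbSat (E : Set X) : E ⊆ OrbSat G E :=
  fun e he => ⟨e, he, MulAction.mem_orbit_self e⟩

theorem orbSat_union (E F : Set X) : OrbSat G (E ∪ F) = OrbSat G E ∪ OrbSat G F := by
  ext z
  constructor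
  · rintro ⟨e, he | he, heo⟩
    exacts [Or.inl ⟨e, he, heo⟩, Or.inr ⟨e, he, heo⟩]
  · rintro (⟨e, he, heo⟩ | ⟨e, he, heo⟩)
    exacts [⟨e, Or.inl he, heo⟩, ⟨e, Or.inr he, heo⟩]

theorem orbSat_inter_compl (E F : Set X) :
    OrbSat G (E ∩ (OrbSat G F)ᶜ) = OrbSat G E ∩ (OrbSat G F)ᶜ := by
  ext z
  constructor
  · rintro ⟨e, ⟨heE, heF⟩, heo⟩
    refine ⟨⟨e, heE, heo⟩, fun hz => heF ?_⟩
    obtain ⟨f, hf, hfo⟩ := hz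
    exact ⟨f, hf, (MulAction.orbit_eq_iff.2 heo) ▸ hfo⟩
  · rintro ⟨⟨e, heE, heo⟩, hz⟩
    refine ⟨e, ⟨heE, fun he => hz ?_⟩, heo⟩
    obtain ⟨f, hf, hfo⟩ := he
    exact ⟨f, hf, (MulAction.orbit_eq_iff.2 heo).symm ▸ hfo⟩

theorem isClosed_orbSat [LocallyCompactSpace X]
    (hproper : IsProperMap (fun p : G × X => (p.2, p.1 • p.2)))
    {K : Set X} (hK : IsCompact K) : IsClosed (OrbSat G K) := by
  rw [← isOpen_compl_iff, isOpen_iff_mem_nhds]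
  intro y hy
  obtain ⟨N, hNc, hNy⟩ := exists_compact_mem_nhds y
  have hT := isCompact_closure_transporter hproper hK hNc
  set C := (fun p : G × X => p.1 • p.2) '' (closure (Transporter G K N) ×ˢ K) with hC
  have hCc : IsCompact C := (hT.prod hK).image continuous_smul
  have hyC : y ∉ C := by
    intro hyC
    obtain ⟨⟨g, k⟩, ⟨-, hk⟩, rfl⟩ := hyC
    exact hy ⟨k, hk, ⟨g⁻¹, inv_smul_smul g k⟩⟩
  refine mem_of_superset
    (inter_mem (interior_mem_nhds.2 hNy) (hCc.isClosed.isOpen_compl.mem_nhds hyC)) ?_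
  rintro z ⟨hzN, hzC⟩ ⟨k, hkK, g, hgz⟩
  have hgz' : g • z = k := hgz
  have hzk : g⁻¹ • k = z := by rw [← hgz', inv_smul_smul]
  exact hzC ⟨(g⁻¹, k),
    ⟨subset_closure ⟨k, hkK, by rw [show g⁻¹ • k = z from hzk]; exact interior_subset hzN⟩, hkK⟩,
    hzk⟩

theorem fc_orbit_compact {Fc : Set X} (hcl : IsClosed Fc) (hfund : IsFundamentalSet G Fc)
    (x : X) : (Fc ∩ MulAction.orbit G x).Nonempty ∧ IsCompact (Fc ∩ MulAction.orbit G x) := by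
  constructor
  · obtain ⟨g, y, hy, hgy⟩ := hfund.1 x
    exact ⟨y, hy, ⟨g⁻¹, show g⁻¹ • x = y by rw [← hgy, inv_smul_smul]⟩⟩
  · obtain ⟨V, hV, hVc⟩ := hfund.2 x
    have hHcl : IsClosed {g : G | g • x ∈ Fc} :=
      hcl.preimage (continuous_id.smul continuous_const)
    have hHsub : {g : G | g • x ∈ Fc} ⊆ closure (Transporter G V Fc) :=
      fun g hg => subset_closure ⟨x, mem_of_mem_nhds hV, hg⟩
    have hHc : IsCompact {g : G | g • x ∈ Fc} :=
      hVc.of_isClosed_subset hHcl hHsub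
    have himg : (fun g : G => g • x) '' {g : G | g • x ∈ Fc} = Fc ∩ MulAction.orbit G x := by
      ext z
      constructor
      · rintro ⟨g, hg, rfl⟩; exact ⟨hg, g, rfl⟩
      · rintro ⟨hz, g, rfl⟩; exact ⟨g, hz, rfl⟩
    rw [← himg]
    exact hHc.image (continuous_id.smul continuous_const)



theorem isFundamentalSet_union [LocallyCompactSpace X]
    (hproper : IsProperMap (fun p : G × X => (p.2, p.1 • p.2)))
    {ι : Type*} {W : ι → Set (Quotient (MulAction.orbitRel G X))} (hW : LocallyFinite W)
    {D : ι → Set X} (hD : ∀ i, IsCompact (closure (D i)))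
    {E : ι → Set (Quotient (MulAction.orbitRel G X))} (hE : ∀ i, E i ⊆ W i)
    (hcov : ∀ x : X, ∃ i, (Quotient.mk (MulAction.orbitRel G X) x : Quotient (MulAction.orbitRel G X)) ∈ E i ∧
      ∃ d ∈ D i, (Quotient.mk (MulAction.orbitRel G X) d : Quotient (MulAction.orbitRel G X)) = Quotient.mk (MulAction.orbitRel G X) x) :
    IsFundamentalSet G
      (⋃ i, D i ∩ (Quotient.mk (MulAction.orbitRel G X) : X → Quotient (MulAction.orbitRel G X)) ⁻¹' (E i)) := by
  constructor
  · intro x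
    obtain ⟨i, hxE, d, hdD, hd⟩ := hcov x
    have hdo : d ∈ MulAction.orbit G x := MulAction.orbitRel_apply.1 (Quotient.exact hd)
    obtain ⟨g, hg⟩ := hdo
    have hg' : g • x = d := hg
    refine ⟨g⁻¹, d, mem_iUnion.2 ⟨i, hdD, by rw [mem_preimage, hd]; exact hxE⟩, ?_⟩
    show g⁻¹ • d = x
    rw [← hg', inv_smul_smul]
  · intro x
    obtain ⟨K, hKc, hKx⟩ := exists_compact_mem_nhds x
    set I := {i | (W i ∩ ((Quotient.mk (MulAction.orbitRel G X) : X → Quotient (MulAction.orbitRel G X)) '' K)).Nonempty}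
      with hI
    have hIfin : I.Finite := hW.finite_nonempty_inter_compact (hKc.image continuous_quot_mk)
    refine ⟨interior K, interior_mem_nhds.2 hKx, ?_⟩
    have hsub : Transporter G (interior K)
          (⋃ i, D i ∩ (Quotient.mk (MulAction.orbitRel G X) : X → Quotient (MulAction.orbitRel G X)) ⁻¹' (E i))
        ⊆ ⋃ i ∈ I, closure (Transporter G K (closure (D i))) := by
      rintro g ⟨a, ha, hb⟩
      obtain ⟨i, hbi⟩ := mem_iUnion.1 hb
      have hπ : (Quotient.mk (MulAction.orbitRel G X) (g • a) : Quotient (MulAction.orbitRel G X)) = Quotient.mk (MulAction.orbitRel G X) a :=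
        Quotient.sound (MulAction.orbitRel_apply.2 ⟨g, rfl⟩)
      have haE : (Quotient.mk (MulAction.orbitRel G X) a : Quotient (MulAction.orbitRel G X)) ∈ E i := by
        rw [← hπ]; exact hbi.2
      have hiI : i ∈ I := ⟨Quotient.mk (MulAction.orbitRel G X) a, hE i haE, ⟨a, interior_subset ha, rfl⟩⟩
      exact mem_biUnion hiI (subset_closure ⟨a, interior_subset ha, subset_closure hbi.1⟩)
    have hcpt : IsCompact (⋃ i ∈ I, closure (Transporter G K (closure (D i)))) :=
      hIfin.isCompact_biUnion (fun i _ => isCompact_closure_transporter hproper hKc (hD i))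
    have hcl : IsClosed (⋃ i ∈ I, closure (Transporter G K (closure (D i)))) :=
      hIfin.isClosed_biUnion (fun i _ => isClosed_closure)
    exact hcpt.of_isClosed_subset isClosed_closure (closure_minimal hsub hcl)

theorem aux_borel_section [LocallyCompactSpace X]
    (hproper : IsProperMap (fun p : G × X => (p.2, p.1 • p.2)))
    {Fc : Set X} (hFcl : IsClosed Fc)
    (hfull : ∀ x : X, (Fc ∩ MulAction.orbit G x).Nonempty)
    (hcpt : ∀ x : X, IsCompact (Fc ∩ MulAction.orbit G x))
    (B : ℕ → Set X) (hBc : ∀ n, IsCompact (closure (B n)))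
    (hsep : ∀ x y : X, x ≠ y → ∃ n, x ∈ B n ∧ y ∉ closure (B n)) :
    ∃ SB : Set X, @MeasurableSet X (borel X) SB ∧
      (∀ x : X, ∃! s : X, s ∈ SB ∧ s ∈ MulAction.orbit G x) ∧ SB ⊆ Fc := by
  classical
  letI : MeasurableSpace X := borel X
  haveI : BorelSpace X := ⟨rfl⟩
  set A : Nat → Set X := fun n => Nat.rec Fc
    (fun n An => (An ∩ closure (B n)) ∪ (An \ OrbSat G (An ∩ closure (B n)))) n with hA
  have hA0 : A 0 = Fc := rfl
  have hAsucc : ∀ n, A (n + 1)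
      = (A n ∩ closure (B n)) ∪ (A n \ OrbSat G (A n ∩ closure (B n))) := fun n => rfl
  have hmono : ∀ n, A (n + 1) ⊆ A n := by
    intro n z hz
    rw [hAsucc] at hz
    rcases hz with hz | hz
    exacts [hz.1, hz.1]
  have horb : ∀ (x : X) (n : Nat),
      A (n + 1) ∩ MulAction.orbit G x =
        if (A n ∩ closure (B n) ∩ MulAction.orbit G x).Nonempty
        then A n ∩ closure (B n) ∩ MulAction.orbit G x
        else A n ∩ MulAction.orbit G x := by
    intro x n
    split_ifs with h
    · ext z
      constructor
      · rintro ⟨hz1, hzo⟩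
        rw [hAsucc] at hz1
        rcases hz1 with hz | ⟨hz, hzn⟩
        · exact ⟨hz, hzo⟩
        · obtain ⟨w, hw, hwo⟩ := h
          exact absurd ⟨w, hw, by rwa [MulAction.orbit_eq_iff.2 hzo]⟩ hzn
      · rintro ⟨⟨h1, h2⟩, h3⟩
        exact ⟨by rw [hAsucc]; exact Or.inl ⟨h1, h2⟩, h3⟩
    · ext z
      constructor
      · rintro ⟨hz1, hzo⟩
        rw [hAsucc] at hz1
        rcases hz1 with hz | ⟨hz, _⟩
        · exact absurd ⟨z, hz, hzo⟩ h
        · exact ⟨hz, hzo⟩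
      · rintro ⟨hz, hzo⟩
        have hzn : z ∉ OrbSat G (A n ∩ closure (B n)) := by
          rintro ⟨e, heI, heo⟩
          exact h ⟨e, heI, by rwa [← MulAction.orbit_eq_iff.2 hzo]⟩
        exact ⟨by rw [hAsucc]; exact Or.inr ⟨hz, hzn⟩, hzo⟩
  have hCcpt : ∀ (x : X) (n : Nat), IsCompact (A n ∩ MulAction.orbit G x) := by
    intro x n
    induction n with
    | zero => rw [hA0]; exact hcpt x
    | succ n ih =>
      rw [horb x n]
      split_ifs with h
      · rw [inter_right_comm]
        exact ih.inter_right isClosed_closure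
      · exact ih
  have hCne : ∀ (x : X) (n : Nat), (A n ∩ MulAction.orbit G x).Nonempty := by
    intro x n
    induction n with
    | zero => rw [hA0]; exact hfull x
    | succ n ih =>
      rw [horb x n]
      split_ifs with h
      exacts [h, ih]
  refine ⟨⋂ n, A n, ?_, ?_, ?_⟩
  · have key : ∀ n, (∀ K : Set X, IsCompact K → MeasurableSet (OrbSat G (A n ∩ K)))
        ∧ MeasurableSet (A n) := by
      intro n
      induction n with
      | zero =>
        rw [hA0]
        exact ⟨fun K hK => (isClosed_orbSat hproper (hK.inter_left hFcl)).measurableSet,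
          hFcl.measurableSet⟩
      | succ n ih =>
        have hSmeas : MeasurableSet (OrbSat G (A n ∩ closure (B n))) := ih.1 _ (hBc n)
        refine ⟨fun K hK => ?_, ?_⟩
        · have hset : A (n + 1) ∩ K =
              (A n ∩ (closure (B n) ∩ K)) ∪
              ((A n ∩ K) ∩ (OrbSat G (A n ∩ closure (B n)))ᶜ) := by
            rw [hAsucc]
            ext z
            constructor
            · rintro ⟨hz | ⟨hz1, hz2⟩, hzK⟩
              exacts [Or.inl ⟨hz.1, hz.2, hzK⟩, Or.inr ⟨⟨hz1, hzK⟩, hz2⟩]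
            · rintro (⟨h1, h2, h3⟩ | ⟨⟨h1, h3⟩, h2⟩)
              exacts [⟨Or.inl ⟨h1, h2⟩, h3⟩, ⟨Or.inr ⟨h1, h2⟩, h3⟩]
          rw [hset, orbSat_union, orbSat_inter_compl]
          exact (ih.1 _ ((hBc n).inter_right hK.isClosed)).union
            ((ih.1 _ hK).inter hSmeas.compl)
        · rw [hAsucc]
          exact (ih.2.inter isClosed_closure.measurableSet).union (ih.2.diff hSmeas)
    exact MeasurableSet.iInter fun n => (key n).2
  · intro x
    have hne : (⋂ n, A n ∩ MulAction.orbit G x).Nonempty := by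
      apply IsCompact.nonempty_iInter_of_sequence_nonempty_isCompact_isClosed
      · exact fun n => inter_subset_inter (hmono n) subset_rfl
      · exact fun n => hCne x n
      · exact hCcpt x 0
      · exact fun n => (hCcpt x n).isClosed
    obtain ⟨s, hs⟩ := hne
    have hsIn : ∀ n, s ∈ A n ∩ MulAction.orbit G x := fun n => mem_iInter.1 hs n
    refine ⟨s, ⟨mem_iInter.2 fun n => (hsIn n).1, (hsIn 0).2⟩, ?_⟩
    rintro y ⟨hySB, hyo⟩
    by_contra hne'
    obtain ⟨n, hyB, hsB⟩ := hsep y s hne'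
    have hnonempty : (A n ∩ closure (B n) ∩ MulAction.orbit G x).Nonempty :=
      ⟨y, ⟨mem_iInter.1 hySB n, subset_closure hyB⟩, hyo⟩
    have heq := horb x n
    rw [if_pos hnonempty] at heq
    have hs' : s ∈ A n ∩ closure (B n) ∩ MulAction.orbit G x := by
      rw [← heq]; exact hsIn (n + 1)
    exact hsB hs'.1.2
  · exact fun z hz => hA0 ▸ mem_iInter.1 hz 0

end Aux

/-- Theorem (sections, Borel sections and fundamental sets): let `G` be a locally
compact group acting properly and continuously on a locally compact Hausdorff space
`X` with paracompact orbit space, and let `S` be a section of the action.  Then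
(i) for every open `U ⊇ S` there are a closed fundamental set `F_c` and an open
fundamental set `F_o` with `F_c ⊆ F_o ⊆ U`; and (ii) if moreover the topology of `X`
is induced by a metric and `X` is separable, there is a Borel section `S_B` which is
also a fundamental set and satisfies `S_B ⊆ F_c ⊆ F_o ⊆ U`. -/
theorem section_fundamental_sets
    (G X : Type*) [Group G] [TopologicalSpace G] [IsTopologicalGroup G]
    [LocallyCompactSpace G] [tX : TopologicalSpace X] [T2Space X] [LocallyCompactSpace X]
    [MulAction G X] [ContinuousSMul G X]
    (hproper : IsProperMap (fun p : G × X => (p.2, p.1 • p.2)))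
    (hpara : ParacompactSpace (Quotient (MulAction.orbitRel G X)))
    (S : Set X) (hS : ∀ x : X, ∃! s : X, s ∈ S ∧ s ∈ MulAction.orbit G x) :
    ∀ U : Set X, IsOpen U → S ⊆ U →
      ∃ Fc Fo : Set X, IsClosed Fc ∧ IsOpen Fo ∧
        IsFundamentalSet G Fc ∧ IsFundamentalSet G Fo ∧ Fc ⊆ Fo ∧ Fo ⊆ U ∧
        (∀ m : MetricSpace X, m.toUniformSpace.toTopologicalSpace = tX →
          TopologicalSpace.SeparableSpace X →
          ∃ SB : Set X, @MeasurableSet _ (borel X) SB ∧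
            (∀ x : X, ∃! s : X, s ∈ SB ∧ s ∈ MulAction.orbit G x) ∧
            IsFundamentalSet G SB ∧ SB ⊆ Fc) := by
  intro U hU hSU
  classical
  haveI : ProperSMul G X := ⟨(Homeomorph.prodComm X X).isProperMap.comp hproper⟩
  haveI := hpara
  haveI : T2Space (Quotient (MulAction.orbitRel G X)) :=
    t2Space_quotient_mulAction_of_properSMul
  haveI : NormalSpace (Quotient (MulAction.orbitRel G X)) := inferInstance
  set Q := Quotient (MulAction.orbitRel G X) with hQ
  set π : X → Q := Quotient.mk (MulAction.orbitRel G X) with hπdef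
  have hπcont : Continuous π := continuous_quot_mk
  have hπopen : IsOpenMap π := isOpenMap_quotient_mk'_mul
  have hsec : ∀ q : Q, ∃ s : X, s ∈ S ∧ π s = q := by
    intro q
    obtain ⟨s, ⟨hsS, hso⟩, -⟩ := hS (Quotient.out q)
    refine ⟨s, hsS, ?_⟩
    rw [show q = π (Quotient.out q) from (Quotient.out_eq q).symm]
    exact Quotient.sound (MulAction.orbitRel_apply.2 hso)
  choose sec hsecS hsecπ using hsec
  have hV : ∀ q : Q, ∃ V Vp : Set X, IsOpen V ∧ IsOpen Vp ∧ sec q ∈ V ∧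
      closure V ⊆ Vp ∧ IsCompact (closure V) ∧ IsCompact (closure Vp) ∧ closure Vp ⊆ U := by
    intro q
    obtain ⟨K₁, hK₁c, hK₁i, hK₁U⟩ := exists_compact_subset hU (hSU (hsecS q))
    obtain ⟨K₂, hK₂c, hK₂i, hK₂V⟩ := exists_compact_subset isOpen_interior hK₁i
    have hcl₂ : closure (interior K₂) ⊆ K₂ := closure_minimal interior_subset hK₂c.isClosed
    have hcl₁ : closure (interior K₁) ⊆ K₁ := closure_minimal interior_subset hK₁c.isClosed
    exact ⟨interior K₂, interior K₁, isOpen_interior, isOpen_interior, hK₂i,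
      hcl₂.trans hK₂V, hK₂c.of_isClosed_subset isClosed_closure hcl₂,
      hK₁c.of_isClosed_subset isClosed_closure hcl₁, hcl₁.trans hK₁U⟩
  choose V Vp hVo hVpo hVmem hVsub hVc hVpc hVpU using hV
  have hcov : ⋃ q : Q, π '' (V q) = univ := by
    apply eq_univ_of_forall
    intro q
    exact mem_iUnion.2 ⟨q, sec q, hVmem q, hsecπ q⟩
  obtain ⟨W, hWo, hWcov, hWlf, hWsub⟩ :=
    precise_refinement (fun q : Q => π '' (V q)) (fun q => hπopen _ (hVo q)) hcov
  obtain ⟨W', hW'cov, hW'o, hW'sub⟩ :=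
    exists_iUnion_eq_closure_subset hWo (fun x => hWlf.point_finite x) hWcov
  have hW'pf : ∀ x, {q : Q | x ∈ W' q}.Finite := fun x =>
    (hWlf.point_finite x).subset fun q hq => hW'sub q (subset_closure hq)
  obtain ⟨W'', hW''cov, hW''o, hW''sub⟩ :=
    exists_iUnion_eq_closure_subset hW'o hW'pf hW'cov
  have hW'W : ∀ q, W' q ⊆ W q := fun q => subset_closure.trans (hW'sub q)
  have hW''W : ∀ q, closure (W'' q) ⊆ W q := fun q => (hW''sub q).trans (hW'W q)
  set Fo := ⋃ q : Q, (Vp q ∩ π ⁻¹' (W' q)) with hFodef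
  set Fc := ⋃ q : Q, (closure (V q) ∩ π ⁻¹' (closure (W'' q))) with hFcdef
  have hFccl : IsClosed Fc := by
    apply LocallyFinite.isClosed_iUnion
    · apply (hWlf.preimage_continuous hπcont).subset
      intro q
      exact inter_subset_right.trans (preimage_mono (hW''W q))
    · exact fun q => (hVc q).isClosed.inter (isClosed_closure.preimage hπcont)
  have hFoop : IsOpen Fo :=
    isOpen_iUnion fun q => (hVpo q).inter ((hW'o q).preimage hπcont)
  have hfume : ∀ q, π '' (V q) ⊆ π '' (Vp q) := fun q =>
    image_mono (subset_closure.trans (hVsub q))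
  have hfundFo : IsFundamentalSet G Fo := by
    apply isFundamentalSet_union hproper hWlf (D := Vp) hVpc (E := W') hW'W
    intro x
    have hx : π x ∈ ⋃ q, W' q := hW'cov ▸ mem_univ _
    obtain ⟨q, hq⟩ := mem_iUnion.1 hx
    obtain ⟨d, hd, hdeq⟩ := hfume q (hWsub q (hW'W q hq))
    exact ⟨q, hq, d, hd, hdeq⟩
  have hfundFc : IsFundamentalSet G Fc := by
    apply isFundamentalSet_union hproper hWlf (D := fun q => closure (V q))
      (fun q => by rw [closure_closure]; exact hVc q) (E := fun q => closure (W'' q)) hW''W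
    intro x
    have hx : π x ∈ ⋃ q, W'' q := hW''cov ▸ mem_univ _
    obtain ⟨q, hq⟩ := mem_iUnion.1 hx
    obtain ⟨d, hd, hdeq⟩ := hWsub q (hW''W q (subset_closure hq))
    exact ⟨q, subset_closure hq, d, subset_closure hd, hdeq⟩
  have hFcFo : Fc ⊆ Fo :=
    iUnion_mono fun q => inter_subset_inter (hVsub q) (preimage_mono (hW''sub q))
  have hFoU : Fo ⊆ U := iUnion_subset fun q =>
    inter_subset_left.trans (subset_closure.trans (hVpU q))
  refine ⟨Fc, Fo, hFccl, hFoop, hfundFc, hfundFo, hFcFo, hFoU, ?_⟩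
  intro m hm hsep
  subst hm
  letI : MetricSpace X := m
  haveI := hsep
  haveI : SecondCountableTopology X :=
    UniformSpace.secondCountable_of_separable X
  have hBex : ∃ B : Nat → Set X, (∀ n, IsCompact (closure (B n))) ∧
      ∀ x y : X, x ≠ y → ∃ n, x ∈ B n ∧ y ∉ closure (B n) := by
    have hcnt : (insert (∅ : Set X)
        {s ∈ TopologicalSpace.countableBasis X | IsCompact (closure s)}).Countable :=
      ((TopologicalSpace.countable_countableBasis X).mono (sep_subset _ _)).insert ∅
    obtain ⟨f, hf⟩ := hcnt.exists_eq_range (insert_nonempty _ _)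
    refine ⟨f, ?_, ?_⟩
    · intro n
      have hmem : f n ∈ insert (∅ : Set X)
          {s ∈ TopologicalSpace.countableBasis X | IsCompact (closure s)} := by
        rw [hf]; exact mem_range_self n
      rcases mem_insert_iff.1 hmem with h | h
      · rw [h]; simp
      · exact h.2
    · intro x y hxy
      obtain ⟨K, hKc, hKi, hKU⟩ := exists_compact_subset isOpen_compl_singleton
        (show x ∈ ({y}ᶜ : Set X) from hxy)
      obtain ⟨s, hsb, hxs, hsK⟩ :=
        (TopologicalSpace.isBasis_countableBasis X).exists_subset_of_mem_open hKi isOpen_interior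
      have hclK : closure s ⊆ K := closure_minimal (hsK.trans interior_subset) hKc.isClosed
      have hmem : s ∈ insert (∅ : Set X)
          {s ∈ TopologicalSpace.countableBasis X | IsCompact (closure s)} :=
        mem_insert_iff.2 (Or.inr ⟨hsb, hKc.of_isClosed_subset isClosed_closure hclK⟩)
      rw [hf] at hmem
      obtain ⟨n, hn⟩ := hmem
      refine ⟨n, by rw [hn]; exact hxs, fun hy => ?_⟩
      have : y ∈ K := hclK (by rwa [hn] at hy)
      exact hKU this rfl
  obtain ⟨B, hBc, hBsep⟩ := hBex
  have horbF := fun x => fc_orbit_compact hFccl hfundFc x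
  obtain ⟨SB, hSBmeas, hSBuniq, hSBsub⟩ :=
    aux_borel_section hproper hFccl (fun x => (horbF x).1) (fun x => (horbF x).2) B hBc hBsep
  refine ⟨SB, hSBmeas, hSBuniq, ⟨?_, ?_⟩, hSBsub⟩
  · intro x
    obtain ⟨s, ⟨hsSB, hso⟩, -⟩ := hSBuniq x
    obtain ⟨g, hg⟩ := hso
    have hg' : g • x = s := hg
    exact ⟨g⁻¹, s, hsSB, show g⁻¹ • s = x by rw [← hg', inv_smul_smul]⟩
  · intro x
    obtain ⟨Vx, hVx, hVxc⟩ := hfundFc.2 x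
    exact ⟨Vx, hVx, hVxc.of_isClosed_subset isClosed_closure
      (closure_mono (transporter_mono subset_rfl hSBsub))⟩
end
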